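/- (Le Cam) If X_1,...,X_L are independent Bernoulli random variables with parameters p_1,...,p_L and W = Σ X_i, λ = Σ p_i, then the total variation-type sum Σ_{k=0}^∞ |P[W = k] - e^{-λ} λ^k / k!| is at most 2 Σ_{i=1}^L p_i². -/

import Mathlib

open Finset

namespace LeCam

noncomputable def poi (a : ℝ) (k : ℕ) : ℝ := Real.exp (-a) * a ^ k / k.factorial

def bern (q : ℝ) (k : ℕ) : ℝ := if k = 0 then 1 - q else if k = 1 then q else 0

noncomputable def cb (q : ℝ) (f : ℕ → ℝ) (k : ℕ) : ℝ :=
  (1 - q) * f k + q * (if k = 0 then 0 else f (k - 1))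

variable {ι : Type*} [DecidableEq ι]

noncomputable def pbm (s : Finset ι) (p : ι → ℝ) (k : ℕ) : ℝ :=
  ∑ S ∈ s.powerset.filter (fun S => S.card = k),
    (∏ i ∈ S, p i) * ∏ i ∈ s \ S, (1 - p i)

lemma pbm_empty (p : ι → ℝ) (k : ℕ) : pbm (∅ : Finset ι) p k = if k = 0 then 1 else 0 := by
  unfold pbm
  rcases Nat.eq_zero_or_pos k with h | h
  · subst h; simp [Finset.filter_true_of_mem]
  · rw [if_neg (by omega)]
    apply Finset.sum_eq_zero
    intro S hS
    simp only [Finset.mem_filter, Finset.mem_powerset, Finset.powerset_empty,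
      Finset.mem_singleton] at hS
    rcases hS with ⟨h1, h2⟩
    simp [h1] at h2
    omega

lemma pbm_insert (p : ι → ℝ) {a : ι} {s : Finset ι} (ha : a ∉ s) (k : ℕ) :
    pbm (insert a s) p k = cb (p a) (pbm s p) k := by
  unfold pbm cb
  rw [Finset.sum_filter, Finset.sum_powerset_insert ha]
  have e1 : ∀ S ∈ s.powerset,
      (if S.card = k then (∏ i ∈ S, p i) * ∏ i ∈ insert a s \ S, (1 - p i) else 0)
      = (1 - p a) * (if S.card = k then (∏ i ∈ S, p i) * ∏ i ∈ s \ S, (1 - p i) else 0) := by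
    intro S hS
    rw [Finset.mem_powerset] at hS
    have haS : a ∉ S := fun h => ha (hS h)
    have h2 : insert a s \ S = insert a (s \ S) := Finset.insert_sdiff_of_notMem s haS
    have h3 : a ∉ s \ S := by simp [ha]
    rw [h2, Finset.prod_insert h3]
    split <;> ring
  have e2 : ∀ S ∈ s.powerset,
      (if (insert a S).card = k then
        (∏ i ∈ insert a S, p i) * ∏ i ∈ insert a s \ insert a S, (1 - p i) else 0)
      = p a * (if S.card + 1 = k then (∏ i ∈ S, p i) * ∏ i ∈ s \ S, (1 - p i) else 0) := by
    intro S hS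
    rw [Finset.mem_powerset] at hS
    have haS : a ∉ S := fun h => ha (hS h)
    have h2 : insert a s \ insert a S = s \ S := by
      ext x
      simp only [Finset.mem_sdiff, Finset.mem_insert, not_or]
      constructor
      · rintro ⟨hx | hx, hxa, hxS⟩
        · exact absurd hx hxa
        · exact ⟨hx, hxS⟩
      · rintro ⟨hx, hxS⟩
        exact ⟨Or.inr hx, fun hxa => ha (hxa ▸ hx), hxS⟩
    rw [h2, Finset.prod_insert haS, Finset.card_insert_of_notMem haS]
    split <;> ring
  rw [Finset.sum_congr rfl e1, Finset.sum_congr rfl e2, ← Finset.mul_sum, ← Finset.mul_sum,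
    ← Finset.sum_filter, ← Finset.sum_filter]
  have hB : ∑ S ∈ s.powerset.filter (fun S => S.card + 1 = k),
        (∏ i ∈ S, p i) * ∏ i ∈ s \ S, (1 - p i)
      = if k = 0 then 0 else ∑ S ∈ s.powerset.filter (fun S => S.card = k - 1),
        (∏ i ∈ S, p i) * ∏ i ∈ s \ S, (1 - p i) := by
    rcases Nat.eq_zero_or_pos k with hk | hk
    · subst hk
      rw [if_pos rfl, Finset.filter_false_of_mem (fun S _ => by omega), Finset.sum_empty]
    · rw [if_neg (by omega)]
      congr 1
      apply Finset.filter_congr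
      intro S _
      omega
  rw [hB]

lemma pbm_eq_zero (p : ι → ℝ) (s : Finset ι) {k : ℕ} (hk : s.card < k) : pbm s p k = 0 := by
  unfold pbm
  apply Finset.sum_eq_zero
  intro S hS
  simp only [Finset.mem_filter, Finset.mem_powerset] at hS
  exact absurd (hS.2 ▸ Finset.card_le_card hS.1) (by omega)

lemma summable_pbm (p : ι → ℝ) (s : Finset ι) : Summable (pbm s p) := by
  apply summable_of_ne_finset_zero (s := Finset.range (s.card + 1))
  intro k hk
  exact pbm_eq_zero p s (by simpa using hk)

lemma poi_nonneg {a : ℝ} (ha : 0 ≤ a) (k : ℕ) : 0 ≤ poi a k := by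
  unfold poi
  positivity

lemma summable_poi (a : ℝ) : Summable (poi a) := by
  have := (Real.summable_pow_div_factorial a).mul_left (Real.exp (-a))
  apply this.congr
  intro k
  unfold poi
  ring

lemma tsum_poi {a : ℝ} : ∑' k, poi a k = 1 := by
  unfold poi
  have h1 : ∑' k : ℕ, a ^ k / k.factorial = Real.exp a := by
    rw [Real.exp_eq_exp_ℝ, NormedSpace.exp_eq_tsum_div]
  calc ∑' k : ℕ, Real.exp (-a) * a ^ k / k.factorial
      = ∑' k : ℕ, Real.exp (-a) * (a ^ k / k.factorial) := by
        apply tsum_congr; intro k; ring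
    _ = Real.exp (-a) * Real.exp a := by rw [tsum_mul_left, h1]
    _ = 1 := by rw [← Real.exp_add]; simp

lemma poi_zero (k : ℕ) : poi 0 k = if k = 0 then 1 else 0 := by
  unfold poi
  rcases Nat.eq_zero_or_pos k with h | h
  · subst h; simp
  · rw [if_neg (by omega), zero_pow (by omega)]
    simp

lemma poi_conv (a b : ℝ) (k : ℕ) :
    poi (a + b) k = ∑ j ∈ Finset.range (k + 1), poi a j * poi b (k - j) := by
  unfold poi
  rw [add_pow, neg_add, Real.exp_add, Finset.mul_sum, Finset.sum_div]
  apply Finset.sum_congr rfl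
  intro j hj
  have hjk : j ≤ k := Nat.lt_succ_iff.mp (Finset.mem_range.mp hj)
  have h := Nat.choose_mul_factorial_mul_factorial hjk
  have h' : (k.choose j : ℝ) * j.factorial * (k - j).factorial = k.factorial := by
    exact_mod_cast congrArg (fun n : ℕ => (n : ℝ)) h
  have hj0 : (j.factorial : ℝ) ≠ 0 := Nat.cast_ne_zero.mpr j.factorial_ne_zero
  have hkj0 : ((k - j).factorial : ℝ) ≠ 0 := Nat.cast_ne_zero.mpr (k - j).factorial_ne_zero
  have hk0 : (k.factorial : ℝ) ≠ 0 := Nat.cast_ne_zero.mpr k.factorial_ne_zero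
  field_simp
  linear_combination (a ^ j * b ^ (k - j)) * h'

lemma cb_sub (q : ℝ) (f g : ℕ → ℝ) (k : ℕ) :
    cb q f k - cb q g k = cb q (fun n => f n - g n) k := by
  unfold cb
  split <;> ring

lemma summable_abs_shift {h : ℕ → ℝ} (hh : Summable fun k => |h k|) :
    Summable (fun k => if k = 0 then (0 : ℝ) else |h (k - 1)|) := by
  apply (summable_nat_add_iff 1).mp
  simpa using hh

lemma tsum_abs_shift {h : ℕ → ℝ} (hh : Summable fun k => |h k|) :
    ∑' k, (if k = 0 then (0 : ℝ) else |h (k - 1)|) = ∑' k, |h k| := by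
  rw [Summable.tsum_eq_zero_add (summable_abs_shift hh)]
  simp

lemma abs_cb_le {q : ℝ} (hq : q ∈ Set.Icc (0 : ℝ) 1) (h : ℕ → ℝ) (k : ℕ) :
    |cb q h k| ≤ (1 - q) * |h k| + q * (if k = 0 then (0 : ℝ) else |h (k - 1)|) := by
  obtain ⟨hq0, hq1⟩ := hq
  unfold cb
  refine (abs_add_le _ _).trans ?_
  rw [abs_mul, abs_mul, abs_of_nonneg (by linarith), abs_of_nonneg hq0]
  gcongr
  split <;> simp

lemma summable_abs_cb {q : ℝ} (hq : q ∈ Set.Icc (0 : ℝ) 1) {h : ℕ → ℝ}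
    (hh : Summable fun k => |h k|) : Summable (fun k => |cb q h k|) := by
  apply Summable.of_nonneg_of_le (fun k => abs_nonneg _) (abs_cb_le hq h)
  exact (hh.mul_left _).add ((summable_abs_shift hh).mul_left _)

lemma tsum_abs_cb_le {q : ℝ} (hq : q ∈ Set.Icc (0 : ℝ) 1) {h : ℕ → ℝ}
    (hh : Summable fun k => |h k|) : ∑' k, |cb q h k| ≤ ∑' k, |h k| := by
  calc ∑' k, |cb q h k|
      ≤ ∑' k, ((1 - q) * |h k| + q * (if k = 0 then (0 : ℝ) else |h (k - 1)|)) := by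
        apply Summable.tsum_le_tsum (abs_cb_le hq h) (summable_abs_cb hq hh)
        exact (hh.mul_left _).add ((summable_abs_shift hh).mul_left _)
    _ = (1 - q) * ∑' k, |h k| + q * ∑' k, (if k = 0 then (0 : ℝ) else |h (k - 1)|) := by
        rw [Summable.tsum_add (hh.mul_left _) ((summable_abs_shift hh).mul_left _),
          tsum_mul_left, tsum_mul_left]
    _ = ∑' k, |h k| := by rw [tsum_abs_shift hh]; ring

lemma conv_bern (q : ℝ) (f : ℕ → ℝ) (k : ℕ) :
    ∑ j ∈ Finset.range (k + 1), f j * bern q (k - j) = cb q f k := by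
  rcases k with _ | m
  · simp [bern, cb]
    ring
  · have e : ∀ j ∈ Finset.range (m + 2), f j * bern q (m + 1 - j)
        = (1 - q) * (if j = m + 1 then f j else 0) + q * (if j = m then f j else 0) := by
      intro j hj
      have hj' : j ≤ m + 1 := by
        have := Finset.mem_range.mp hj
        omega
      by_cases h1 : j = m + 1
      · subst h1
        simp [bern]
        ring
      by_cases h2 : j = m
      · subst h2
        simp [bern]
        ring
      · have ha : m + 1 - j ≠ 0 := by omega
        have hb : m + 1 - j ≠ 1 := by omega
        simp [bern, ha, hb, h1, h2]
    rw [Finset.sum_congr rfl e, Finset.sum_add_distrib, ← Finset.mul_sum, ← Finset.mul_sum,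
      Finset.sum_ite_eq' (Finset.range (m + 2)) (m + 1) f,
      Finset.sum_ite_eq' (Finset.range (m + 2)) m f]
    simp [cb]

lemma summable_bern (q : ℝ) : Summable (bern q) := by
  apply summable_of_ne_finset_zero (s := Finset.range 2)
  intro k hk
  have h0 : k ≠ 0 := by simp at hk; omega
  have h1 : k ≠ 1 := by simp at hk; omega
  simp [bern, h0, h1]

lemma summable_abs_bern_sub_poi (q : ℝ) :
    Summable (fun k => |bern q k - poi q k|) := ((summable_bern q).sub (summable_poi q)).abs

lemma tsum_abs_bern_sub_poi {q : ℝ} (hq : q ∈ Set.Icc (0 : ℝ) 1) :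
    ∑' k, |bern q k - poi q k| ≤ 2 * q ^ 2 := by
  obtain ⟨hq0, hq1⟩ := hq
  have hS := summable_abs_bern_sub_poi q
  have hS1 : Summable (fun k => |bern q (k + 1) - poi q (k + 1)|) := by
    apply (summable_nat_add_iff 1).mpr hS
  have hexp1 : 1 - q ≤ Real.exp (-q) := by
    have := Real.add_one_le_exp (-q)
    linarith
  have hexp2 : Real.exp (-q) ≤ 1 := Real.exp_le_one_iff.mpr (by linarith)
  -- tail of the Poisson series
  have hpoiS := summable_poi q
  have hpoiS1 : Summable (fun k => poi q (k + 1)) := (summable_nat_add_iff 1).mpr hpoiS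
  have hpoiS2 : Summable (fun k => poi q (k + 2)) := by
    have := (summable_nat_add_iff 2).mpr hpoiS
    exact this
  have htail : ∑' k, poi q (k + 2) = 1 - Real.exp (-q) - Real.exp (-q) * q := by
    have h1 : ∑' k, poi q k = poi q 0 + ∑' k, poi q (k + 1) := Summable.tsum_eq_zero_add hpoiS
    have h2 : ∑' k, poi q (k + 1) = poi q 1 + ∑' k, poi q (k + 2) := by
      have := Summable.tsum_eq_zero_add hpoiS1
      simpa using this
    have h0 : poi q 0 = Real.exp (-q) := by unfold poi; simp
    have h1' : poi q 1 = Real.exp (-q) * q := by unfold poi; simp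
    rw [tsum_poi] at h1
    rw [h0] at h1
    rw [h1', ] at h2
    linarith
  have hsplit : ∑' k, |bern q k - poi q k|
      = |bern q 0 - poi q 0| + |bern q 1 - poi q 1| + ∑' k, |bern q (k + 2) - poi q (k + 2)| := by
    rw [Summable.tsum_eq_zero_add hS]
    have := Summable.tsum_eq_zero_add hS1
    rw [this]
    rw [show (fun b : ℕ => |bern q (b + 1 + 1) - poi q (b + 1 + 1)|)
      = (fun k : ℕ => |bern q (k + 2) - poi q (k + 2)|) from rfl]
    norm_num
    ring
  have htail2 : ∑' k, |bern q (k + 2) - poi q (k + 2)| = ∑' k, poi q (k + 2) := by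
    apply tsum_congr
    intro k
    have hb : bern q (k + 2) = 0 := by simp [bern]
    rw [hb, zero_sub, abs_neg, abs_of_nonneg (poi_nonneg hq0 _)]
  have h0 : |bern q 0 - poi q 0| = Real.exp (-q) - (1 - q) := by
    have hb : bern q 0 = 1 - q := by simp [bern]
    have hp : poi q 0 = Real.exp (-q) := by unfold poi; simp
    rw [hb, hp, abs_sub_comm, abs_of_nonneg (by linarith)]
  have h1 : |bern q 1 - poi q 1| = q * (1 - Real.exp (-q)) := by
    have hb : bern q 1 = q := by simp [bern]
    have hp : poi q 1 = Real.exp (-q) * q := by unfold poi; simp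
    rw [hb, hp, abs_of_nonneg (by nlinarith)]
    ring
  rw [hsplit, htail2, htail, h0, h1]
  nlinarith [Real.add_one_le_exp (-q)]

lemma tsum_abs_conv_le {g h : ℕ → ℝ} (hg : ∀ k, 0 ≤ g k) (hgs : Summable g)
    (hhs : Summable fun k => |h k|) :
    Summable (fun k => |∑ j ∈ Finset.range (k + 1), g j * h (k - j)|) ∧
    ∑' k, |∑ j ∈ Finset.range (k + 1), g j * h (k - j)|
      ≤ (∑' k, g k) * (∑' k, |h k|) := by
  have hgn : Summable fun k => ‖g k‖ := by
    apply hgs.congr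
    intro k
    rw [Real.norm_eq_abs, abs_of_nonneg (hg k)]
  have hhn : Summable fun k => ‖|h k|‖ := by
    apply hhs.congr
    intro k
    rw [Real.norm_eq_abs, abs_abs]
  have hB : Summable (fun k => ∑ j ∈ Finset.range (k + 1), g j * |h (k - j)|) := by
    have := summable_norm_sum_mul_range_of_summable_norm hgn hhn
    apply this.congr
    intro k
    rw [Real.norm_eq_abs, abs_of_nonneg]
    apply Finset.sum_nonneg
    intro j _
    exact mul_nonneg (hg j) (abs_nonneg _)
  have hle : ∀ k, |∑ j ∈ Finset.range (k + 1), g j * h (k - j)|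
      ≤ ∑ j ∈ Finset.range (k + 1), g j * |h (k - j)| := by
    intro k
    refine (Finset.abs_sum_le_sum_abs _ _).trans ?_
    apply Finset.sum_le_sum
    intro j _
    rw [abs_mul, abs_of_nonneg (hg j)]
  have hsum : Summable (fun k => |∑ j ∈ Finset.range (k + 1), g j * h (k - j)|) :=
    Summable.of_nonneg_of_le (fun k => abs_nonneg _) hle hB
  refine ⟨hsum, ?_⟩
  calc ∑' k, |∑ j ∈ Finset.range (k + 1), g j * h (k - j)|
      ≤ ∑' k, ∑ j ∈ Finset.range (k + 1), g j * |h (k - j)| := Summable.tsum_le_tsum hle hsum hB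
    _ = (∑' k, g k) * (∑' k, |h k|) := by
        rw [tsum_mul_tsum_eq_tsum_sum_range_of_summable_norm hgn hhn]

lemma summable_abs_pbm_sub_poi (p : ι → ℝ) (s : Finset ι) (a : ℝ) :
    Summable (fun k => |pbm s p k - poi a k|) := ((summable_pbm p s).sub (summable_poi a)).abs

lemma key (p : ι → ℝ) (hp : ∀ i, p i ∈ Set.Icc (0 : ℝ) 1) (s : Finset ι) :
    ∑' k, |pbm s p k - poi (∑ i ∈ s, p i) k| ≤ 2 * ∑ i ∈ s, (p i) ^ 2 := by
  induction s using Finset.induction_on with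
  | empty =>
      have : ∀ k, |pbm (∅ : Finset ι) p k - poi (∑ i ∈ (∅ : Finset ι), p i) k| = 0 := by
        intro k
        rw [Finset.sum_empty, pbm_empty, poi_zero, sub_self, abs_zero]
      rw [tsum_congr this]
      simp
  | @insert a s ha ih =>
      set q := p a with hq_def
      set lam := ∑ i ∈ s, p i with hlam_def
      have hq : q ∈ Set.Icc (0 : ℝ) 1 := hp a
      have hlam0 : 0 ≤ lam := Finset.sum_nonneg fun i _ => (hp i).1
      have hsum : ∑ i ∈ insert a s, p i = lam + q := by
        rw [Finset.sum_insert ha]; ring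
      have hsq : ∑ i ∈ insert a s, (p i) ^ 2 = q ^ 2 + ∑ i ∈ s, (p i) ^ 2 :=
        Finset.sum_insert ha
      have hfg : Summable (fun k => |pbm s p k - poi lam k|) := summable_abs_pbm_sub_poi p s lam
      have hd : Summable (fun k => |bern q k - poi q k|) := summable_abs_bern_sub_poi q
      obtain ⟨hconvS, hconvB⟩ := tsum_abs_conv_le (g := poi lam)
        (h := fun k => bern q k - poi q k) (poi_nonneg hlam0) (summable_poi lam) hd
      have hid : ∀ k, pbm (insert a s) p k - poi (∑ i ∈ insert a s, p i) k
          = cb q (fun n => pbm s p n - poi lam n) k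
            + ∑ j ∈ Finset.range (k + 1), poi lam j * (bern q (k - j) - poi q (k - j)) := by
        intro k
        rw [pbm_insert p ha, hsum]
        have h1 : poi (lam + q) k
            = ∑ j ∈ Finset.range (k + 1), poi lam j * poi q (k - j) := poi_conv lam q k
        have h2 : cb q (poi lam) k
            = ∑ j ∈ Finset.range (k + 1), poi lam j * bern q (k - j) :=
          (conv_bern q (poi lam) k).symm
        have h3 : ∑ j ∈ Finset.range (k + 1), poi lam j * (bern q (k - j) - poi q (k - j))
            = ∑ j ∈ Finset.range (k + 1), poi lam j * bern q (k - j)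
              - ∑ j ∈ Finset.range (k + 1), poi lam j * poi q (k - j) := by
          rw [← Finset.sum_sub_distrib]
          apply Finset.sum_congr rfl
          intro j _
          ring
        rw [h3, ← cb_sub, h1, ← h2]
        ring
      have hcbS : Summable (fun k => |cb q (fun n => pbm s p n - poi lam n) k|) :=
        summable_abs_cb hq hfg
      have hptle : ∀ k, |pbm (insert a s) p k - poi (∑ i ∈ insert a s, p i) k|
          ≤ |cb q (fun n => pbm s p n - poi lam n) k|
            + |∑ j ∈ Finset.range (k + 1), poi lam j * (bern q (k - j) - poi q (k - j))| := by
        intro k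
        rw [hid k]
        exact abs_add_le _ _
      have hRS : Summable (fun k => |cb q (fun n => pbm s p n - poi lam n) k|
          + |∑ j ∈ Finset.range (k + 1), poi lam j * (bern q (k - j) - poi q (k - j))|) :=
        hcbS.add hconvS
      calc ∑' k, |pbm (insert a s) p k - poi (∑ i ∈ insert a s, p i) k|
          ≤ ∑' k, (|cb q (fun n => pbm s p n - poi lam n) k|
            + |∑ j ∈ Finset.range (k + 1), poi lam j * (bern q (k - j) - poi q (k - j))|) :=
            Summable.tsum_le_tsum hptle
              (Summable.of_nonneg_of_le (fun k => abs_nonneg _) hptle hRS) hRS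
        _ = ∑' k, |cb q (fun n => pbm s p n - poi lam n) k|
            + ∑' k, |∑ j ∈ Finset.range (k + 1),
                poi lam j * (bern q (k - j) - poi q (k - j))| := Summable.tsum_add hcbS hconvS
        _ ≤ 2 * ∑ i ∈ s, (p i) ^ 2 + 2 * q ^ 2 := by
            apply add_le_add ((tsum_abs_cb_le hq hfg).trans ih)
            rw [tsum_poi, one_mul] at hconvB
            exact hconvB.trans (tsum_abs_bern_sub_poi hq)
        _ ≤ 2 * ∑ i ∈ insert a s, (p i) ^ 2 := by
            rw [hsq]
            linarith

end LeCam

/-- The pmf of a Poisson-binomial random variable `W = ∑ X_i`, a sum of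
independent Bernoulli(`p i`) variables: `P[W = k]` is the sum over all subsets
of size `k` of the product of successes times the product of failures. -/
def poissonBinomialPMF (L : ℕ) (p : Fin L → ℝ) (k : ℕ) : ℝ :=
  ∑ S ∈ Finset.univ.powerset.filter (fun S : Finset (Fin L) => S.card = k),
    (∏ i ∈ S, p i) * ∏ i ∈ Sᶜ, (1 - p i)

/-- Le Cam's theorem: the ℓ¹ distance between the Poisson-binomial pmf with
parameters `p_1,…,p_L` and the Poisson pmf with mean `λ = ∑ p_i` is at most
`2 ∑ p_i²`. -/
theorem le_cam (L : ℕ) (p : Fin L → ℝ) (hp : ∀ i, p i ∈ Set.Icc (0 : ℝ) 1)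
    (lam : ℝ) (hlam : ∑ i, p i = lam) :
    ∑' k : ℕ, |poissonBinomialPMF L p k - Real.exp (-lam) * lam ^ k / (Nat.factorial k)|
      ≤ 2 * ∑ i, (p i) ^ 2 := by
  have hpb : ∀ k, poissonBinomialPMF L p k = LeCam.pbm Finset.univ p k := by
    intro k
    unfold poissonBinomialPMF LeCam.pbm
    apply Finset.sum_congr rfl
    intro S hS
    rw [Finset.compl_eq_univ_sdiff]
  have h := LeCam.key p hp Finset.univ
  rw [hlam] at h
  have he : ∀ k : ℕ, |poissonBinomialPMF L p k - Real.exp (-lam) * lam ^ k / (Nat.factorial k)|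
      = |LeCam.pbm Finset.univ p k - LeCam.poi lam k| := by
    intro k
    rw [hpb k]
    rfl
  rw [tsum_congr he]
  exact h
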